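/- Suppose φ_n, Δθ̃_n ∈ ℝ², f_{n-1}^{-1} symmetric positive definite, and w_n = Δθ̃_n^T φ_n, s_n = ε_n + (α_{n+1}/2) Δθ̃_n^T φ_n, where φ_n φ_n^T = β_n^{-1}(f_n^{-1} − α_n f_{n-1}^{-1}) and φ_n ε_n = (α_n/β_n) f_{n-1}^{-1} Δθ̃_n − (α_n/β_{n-1}) f_{n-1}^{-1} Δθ̃_{n-1}. If η_n := (2 − α_{n+1})/β_n − 1/β_{n-1} ≥ 0 for all n, and Δθ̃_0 = 0, f_0^{-1} = 0, then Σ_{n=1}^{2k} w_n s_n ≥ 0 for every k ≥ 1. -/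

import Mathlib

open Matrix Finset

lemma popov_dot_vecMulVec (u v x y : Fin 2 → ℝ) :
    x ⬝ᵥ (vecMulVec u v *ᵥ y) = (x ⬝ᵥ u) * (v ⬝ᵥ y) := by
  simp [dotProduct, vecMulVec_apply, mulVec, Finset.mul_sum, Finset.sum_mul]
  ring

lemma popov_dot_symm (A : Matrix (Fin 2) (Fin 2) ℝ) (h : A.IsHermitian) (x y : Fin 2 → ℝ) :
    x ⬝ᵥ A *ᵥ y = y ⬝ᵥ A *ᵥ x := by
  rw [dotProduct_mulVec, ← mulVec_transpose, ← conjTranspose_eq_transpose_of_trivial, h.eq,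
    dotProduct_comm]

/-- the Popov inequality Σ w_n s_n ≥ 0 for the nonlinear block. -/
theorem popov_inequality_nonlinear_block
    (α β : ℕ → ℝ) (hα : ∀ n, 0 < α n) (hβ : ∀ n, 0 < β n)
    (hα1 : α 1 = 1) (hβ0 : β 0 = 1)
    (φ Δ : ℕ → (Fin 2 → ℝ)) (ε w s η : ℕ → ℝ)
    (fInv : ℕ → Matrix (Fin 2) (Fin 2) ℝ)
    (hf0 : fInv 0 = 0)
    (hfrec : ∀ n : ℕ, 1 ≤ n → fInv n = α n • fInv (n - 1) + β n • vecMulVec (φ n) (φ n))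
    (hfpsd : ∀ n, (fInv n).PosSemidef)
    (hΔ0 : Δ 0 = 0)
    (hφε : ∀ n : ℕ, 1 ≤ n →
      (ε n) • φ n = (α n / β n) • (fInv (n - 1)).mulVec (Δ n)
                  - (α n / β (n - 1)) • (fInv (n - 1)).mulVec (Δ (n - 1)))
    (hw : ∀ n, w n = Δ n ⬝ᵥ φ n)
    (hs : ∀ n, s n = ε n + (α (n + 1) / 2) * (Δ n ⬝ᵥ φ n))
    (hη : ∀ n, η n = (2 - α (n + 1)) / β n - 1 / β (n - 1))
    (hηnonneg : ∀ n : ℕ, 1 ≤ n → 0 ≤ η n) :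
    ∀ k : ℕ, 1 ≤ k → 0 ≤ ∑ n ∈ Finset.Icc 1 (2 * k), w n * s n := by
  -- the Lyapunov-like quantity
  set a : ℕ → ℝ := fun n => Δ n ⬝ᵥ (fInv n *ᵥ Δ n) with ha
  have ha0 : a 0 = 0 := by simp [ha, hf0]
  have hanonneg : ∀ n, 0 ≤ a n := fun n => by simpa only [star_trivial] using (hfpsd n).dotProduct_mulVec_nonneg (Δ n)
  -- per-step inequality
  have hstep : ∀ m : ℕ,
      α (m + 2) / (2 * β (m + 1)) * a (m + 1) - α (m + 1) / (2 * β m) * a m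
        ≤ w (m + 1) * s (m + 1) := by
    intro m
    have h1 : (1 : ℕ) ≤ m + 1 := le_add_self
    set b : ℝ := Δ (m + 1) ⬝ᵥ (fInv m *ᵥ Δ (m + 1)) with hb
    set c : ℝ := Δ (m + 1) ⬝ᵥ (fInv m *ᵥ Δ m) with hc
    set wn : ℝ := Δ (m + 1) ⬝ᵥ φ (m + 1) with hwn
    -- F1 : a (m+1) = α (m+1) * b + β (m+1) * wn^2
    have F1 : a (m + 1) = α (m + 1) * b + β (m + 1) * wn ^ 2 := by
      have := hfrec (m + 1) h1
      simp only [Nat.add_sub_cancel] at this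
      rw [ha]
      simp only [this, add_mulVec, smul_mulVec, dotProduct_add, dotProduct_smul,
        popov_dot_vecMulVec]
      rw [dotProduct_comm (φ (m + 1)) (Δ (m + 1))]
      rw [hb, hwn]
      ring_nf
    -- F2, multiplied through by β (m+1) * β m
    have F2 : β (m + 1) * β m * (wn * ε (m + 1)) = α (m + 1) * β m * b - α (m + 1) * β (m + 1) * c := by
      have h := hφε (m + 1) h1
      simp only [Nat.add_sub_cancel] at h
      have h2 := congrArg (fun v => Δ (m + 1) ⬝ᵥ v) h
      simp only [dotProduct_smul, dotProduct_sub, smul_eq_mul] at h2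
      rw [← hwn, ← hb, ← hc] at h2
      have hb1 := (hβ (m + 1)).ne'
      have hbm := (hβ m).ne'
      field_simp at h2 ⊢
      nlinarith [h2]
    -- F3 : Cauchy-Schwarz / psd of fInv m
    have F3 : 0 ≤ b - 2 * c + a m := by
      have hpsd := (hfpsd m).dotProduct_mulVec_nonneg (Δ (m + 1) - Δ m)
      simp only [star_trivial] at hpsd
      rw [mulVec_sub, dotProduct_sub, sub_dotProduct, sub_dotProduct] at hpsd
      have hsym : Δ m ⬝ᵥ (fInv m *ᵥ Δ (m + 1)) = c :=
        popov_dot_symm (fInv m) (hfpsd m).1 (Δ m) (Δ (m + 1))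
      rw [hsym] at hpsd
      simp only [← hb, ← hc, ← ha] at hpsd
      linarith [hpsd]
    have F4 : 0 ≤ b := by simpa only [star_trivial] using (hfpsd m).dotProduct_mulVec_nonneg (Δ (m + 1))
    -- F5 : η condition multiplied through
    have F5 : β (m + 1) ≤ (2 - α (m + 2)) * β m := by
      have h := hηnonneg (m + 1) h1
      rw [hη (m + 1)] at h
      simp only [Nat.add_sub_cancel] at h
      have hb1 := hβ (m + 1)
      have hbm := hβ m
      rw [sub_nonneg, div_le_div_iff₀ hbm hb1] at h
      nlinarith [h]
    -- assemble
    rw [hs (m + 1), hw (m + 1), ← hwn]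
    rw [← sub_nonneg]
    have hpos : (0 : ℝ) < 2 * β (m + 1) * β m := by
      have := hβ (m + 1); have := hβ m; nlinarith
    have key : wn * (ε (m + 1) + α (m + 1 + 1) / 2 * wn) -
        (α (m + 2) / (2 * β (m + 1)) * a (m + 1) - α (m + 1) / (2 * β m) * a m)
        = (2 * (β (m + 1) * β m * (wn * ε (m + 1))) + α (m + 2) * β (m + 1) * β m * wn ^ 2
            - α (m + 2) * β m * (α (m + 1) * b + β (m + 1) * wn ^ 2) + α (m + 1) * β (m + 1) * a m)
          / (2 * β (m + 1) * β m) := by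
      rw [F1]
      have hb1 := (hβ (m + 1)).ne'
      have hbm := (hβ m).ne'
      field_simp
      ring
    rw [key]
    apply div_nonneg _ hpos.le
    rw [F2]
    nlinarith [F3, F4, F5,
      mul_nonneg (mul_nonneg (hα (m + 1)).le (hβ (m + 1)).le) F3,
      mul_nonneg (mul_nonneg (hα (m + 1)).le F4) (sub_nonneg.2 F5)]
  -- telescoping : sum from 1 to N is at least α (N+1)/(2 β N) * a N
  have htel : ∀ N : ℕ, α (N + 1) / (2 * β N) * a N ≤ ∑ n ∈ Finset.Icc 1 N, w n * s n := by
    intro N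
    induction N with
    | zero => simp [ha0, hα1]
    | succ m ih =>
      rw [Finset.sum_Icc_succ_top (by omega : 1 ≤ m + 1)]
      have := hstep m
      linarith
  intro k hk
  have := htel (2 * k)
  have hA : 0 ≤ α (2 * k + 1) / (2 * β (2 * k)) * a (2 * k) :=
    mul_nonneg (div_nonneg (hα _).le (by linarith [hβ (2 * k)])) (hanonneg _)
  linarith
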